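/- Let U be a nonempty finite type, let X take values in {A,B}, and let Q take values in {qA, qB, qAB} with lengths ℓ(qA)=ℓ(qB)=1, ℓ(qAB)=2. Let p be a joint pmf of (U,X,Q) with P(U=u)>0 for every u, satisfying decodability (P(X=A, Q=qB)=0 and P(X=B, Q=qA)=0) and privacy (Q independent of U). Suppose in addition that X is a deterministic function of U, i.e. X = f(U) almost surely for some f, and that both P(X=A) > 0 and P(X=B) > 0. Then E[ℓ(Q)] = 2; equivalently, P(Q = qAB) = 1. -/

import Mathlib

/-- The two sources. -/
inductive Src | A | B
deriving DecidableEq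

instance : Fintype Src := ⟨{Src.A, Src.B}, fun x => by cases x <;> simp⟩

/-- The three possible queries: only source A, only source B, or both. -/
inductive Qry | qA | qB | qAB
deriving DecidableEq

instance : Fintype Qry := ⟨{Qry.qA, Qry.qB, Qry.qAB}, fun x => by cases x <;> simp⟩

/-- The length (download cost) of each query. -/
noncomputable def len : Qry → ℝ
  | Qry.qA => 1
  | Qry.qB => 1
  | Qry.qAB => 2

/-- If additionally `X` is a deterministic function of `U` (privacy is ON) and both values of
`X` occur with positive probability, then decodability and privacy force the user to always
download both messages: `E[ℓ(Q)] = 2`, equivalently `P(Q = qAB) = 1`. -/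
theorem privacy_on_full_download {U : Type} [Fintype U] [Nonempty U]
    (p : U → Src → Qry → ℝ)
    (hnn : ∀ u x q, 0 ≤ p u x q)
    (hsum : ∑ u, ∑ x, ∑ q, p u x q = 1)
    (hUpos : ∀ u, 0 < ∑ x, ∑ q, p u x q)
    (hdecA : ∑ u, p u Src.A Qry.qB = 0)
    (hdecB : ∑ u, p u Src.B Qry.qA = 0)
    (hpriv : ∀ u q, ∑ x, p u x q
      = (∑ x, ∑ q', p u x q') * (∑ u', ∑ x, p u' x q))
    -- X is a deterministic function of U almost surely
    (f : U → Src)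
    (hdet : ∑ u, ∑ q, p u (f u) q = 1)
    -- both requests occur with positive probability
    (hA : 0 < ∑ u, ∑ q, p u Src.A q)
    (hB : 0 < ∑ u, ∑ q, p u Src.B q) :
    (∑ u, ∑ x, ∑ q, p u x q * len q = 2) ∧ (∑ u, ∑ x, p u x Qry.qAB = 1) := by
  have sumSrc : ∀ g : Src → ℝ, ∑ x, g x = g Src.A + g Src.B := by
    intro g
    rw [show (Finset.univ : Finset Src) = {Src.A, Src.B} from rfl]
    simp
  have sumQry : ∀ g : Qry → ℝ, ∑ q, g q = g Qry.qA + g Qry.qB + g Qry.qAB := by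
    intro g
    rw [show (Finset.univ : Finset Qry) = {Qry.qA, Qry.qB, Qry.qAB} from rfl]
    simp [add_assoc]
  -- decodability pointwise
  have hdA : ∀ u, p u Src.A Qry.qB = 0 := by
    intro u
    have := (Finset.sum_eq_zero_iff_of_nonneg (fun u _ => hnn u Src.A Qry.qB)).1 hdecA
    exact this u (Finset.mem_univ u)
  have hdB : ∀ u, p u Src.B Qry.qA = 0 := by
    intro u
    have := (Finset.sum_eq_zero_iff_of_nonneg (fun u _ => hnn u Src.B Qry.qA)).1 hdecB
    exact this u (Finset.mem_univ u)
  -- determinism pointwise: p u x q = 0 when x ≠ f u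
  have sumq_nn : ∀ u x, 0 ≤ ∑ q, p u x q := fun u x =>
    Finset.sum_nonneg fun q _ => hnn u x q
  have hdiff : ∑ u, (∑ x, ∑ q, p u x q - ∑ q, p u (f u) q) = 0 := by
    rw [Finset.sum_sub_distrib, hsum, hdet]; ring
  have hdiff0 : ∀ u, ∑ x, ∑ q, p u x q - ∑ q, p u (f u) q = 0 := by
    intro u
    have h1 : ∀ v : U, v ∈ (Finset.univ : Finset U) →
        0 ≤ ∑ x, ∑ q, p v x q - ∑ q, p v (f v) q := by
      intro v _
      rw [sumSrc]
      cases h : f v <;> simp [h] <;> [exact sumq_nn v Src.B; exact sumq_nn v Src.A]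
    exact (Finset.sum_eq_zero_iff_of_nonneg h1).1 hdiff u (Finset.mem_univ u)
  have hdet0 : ∀ u x, x ≠ f u → ∀ q, p u x q = 0 := by
    intro u x hx q
    have h := hdiff0 u
    rw [sumSrc] at h
    have hsq : ∑ q, p u x q = 0 := by
      cases hf : f u <;> rw [hf] at h hx <;> cases x <;> simp_all <;> linarith
    have := (Finset.sum_eq_zero_iff_of_nonneg (fun q _ => hnn u x q)).1 hsq
    exact this q (Finset.mem_univ q)
  -- exists u with f u = B
  obtain ⟨uB, -, huB⟩ := Finset.exists_lt_of_sum_lt (f := fun _ : U => (0:ℝ))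
    (g := fun u => ∑ q, p u Src.B q) (by simpa using hB)
  have hfuB : f uB = Src.B := by
    by_contra h
    have : ∑ q, p uB Src.B q = 0 :=
      Finset.sum_eq_zero fun q _ => hdet0 uB Src.B (fun he => h he.symm) q
    linarith
  obtain ⟨uA, -, huA⟩ := Finset.exists_lt_of_sum_lt (f := fun _ : U => (0:ℝ))
    (g := fun u => ∑ q, p u Src.A q) (by simpa using hA)
  have hfuA : f uA = Src.A := by
    by_contra h
    have : ∑ q, p uA Src.A q = 0 :=
      Finset.sum_eq_zero fun q _ => hdet0 uA Src.A (fun he => h he.symm) q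
    linarith
  -- P(Q = qA) = 0 and P(Q = qB) = 0
  have hQA : ∑ u', ∑ x, p u' x Qry.qA = 0 := by
    have h := hpriv uB Qry.qA
    rw [sumSrc] at h
    rw [hdet0 uB Src.A (by rw [hfuB]; simp) Qry.qA, hdB uB] at h
    have hu := hUpos uB
    rw [add_zero] at h
    rcases mul_eq_zero.1 h.symm with h' | h'
    · exact absurd h' (ne_of_gt hu)
    · exact h'
  have hQB : ∑ u', ∑ x, p u' x Qry.qB = 0 := by
    have h := hpriv uA Qry.qB
    rw [sumSrc] at h
    rw [hdet0 uA Src.B (by rw [hfuA]; simp) Qry.qB, hdA uA] at h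
    have hu := hUpos uA
    rw [add_zero] at h
    rcases mul_eq_zero.1 h.symm with h' | h'
    · exact absurd h' (ne_of_gt hu)
    · exact h'
  -- pointwise zero for qA and qB
  have hQA0 : ∀ u x, p u x Qry.qA = 0 := by
    intro u x
    have h := (Finset.sum_eq_zero_iff_of_nonneg
      (fun u (_ : u ∈ Finset.univ) => Finset.sum_nonneg
        fun x (_ : x ∈ Finset.univ) => hnn u x Qry.qA)).1 hQA u (Finset.mem_univ u)
    have := (Finset.sum_eq_zero_iff_of_nonneg
      (fun x (_ : x ∈ Finset.univ) => hnn u x Qry.qA)).1 h x (Finset.mem_univ x)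
    exact this
  have hQB0 : ∀ u x, p u x Qry.qB = 0 := by
    intro u x
    have h := (Finset.sum_eq_zero_iff_of_nonneg
      (fun u (_ : u ∈ Finset.univ) => Finset.sum_nonneg
        fun x (_ : x ∈ Finset.univ) => hnn u x Qry.qB)).1 hQB u (Finset.mem_univ u)
    have := (Finset.sum_eq_zero_iff_of_nonneg
      (fun x (_ : x ∈ Finset.univ) => hnn u x Qry.qB)).1 h x (Finset.mem_univ x)
    exact this
  have hAB : ∑ u, ∑ x, p u x Qry.qAB = 1 := by
    have : ∑ u, ∑ x, ∑ q, p u x q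
        = ∑ u, ∑ x, p u x Qry.qA + ∑ u, ∑ x, p u x Qry.qB
          + ∑ u, ∑ x, p u x Qry.qAB := by
      rw [← Finset.sum_add_distrib, ← Finset.sum_add_distrib]
      refine Finset.sum_congr rfl fun u _ => ?_
      rw [← Finset.sum_add_distrib, ← Finset.sum_add_distrib]
      exact Finset.sum_congr rfl fun x _ => sumQry _
    rw [this, hQA, hQB] at hsum
    linarith
  refine ⟨?_, hAB⟩
  have : ∑ u, ∑ x, ∑ q, p u x q * len q = 2 * ∑ u, ∑ x, p u x Qry.qAB := by
    rw [Finset.mul_sum]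
    refine Finset.sum_congr rfl fun u _ => ?_
    rw [Finset.mul_sum]
    refine Finset.sum_congr rfl fun x _ => ?_
    rw [sumQry (fun q => p u x q * len q), hQA0, hQB0]
    simp [len]; ring
  rw [this, hAB]; ring
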